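/- Let F be a quadratic map of the plane such that det DF(x,y) ≠ 0 for all (x,y) ∈ ℝ² (i.e., the critical set J₀ is empty). Then det DF is constant: there exists a nonzero real number c with det DF(x,y) = c for all (x,y) ∈ ℝ². -/

import Mathlib

/-- A quadratic `a t^2 + b t + k` with positive leading coefficient takes a
positive value somewhere. -/
lemma stmt18_ex_pos (a b k : ℝ) (ha : 0 < a) : ∃ t : ℝ, 0 < a*t^2 + b*t + k := by
  refine ⟨(|b| + |k| + a)/a, ?_⟩
  have ht : a * ((|b| + |k| + a)/a) = |b| + |k| + a := by
    field_simp
  have ht1 : (1:ℝ) ≤ (|b| + |k| + a)/a := by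
    rw [le_div_iff₀ ha]
    nlinarith [abs_nonneg b, abs_nonneg k]
  nlinarith [neg_abs_le b, neg_abs_le k, abs_nonneg b, abs_nonneg k,
    mul_le_mul_of_nonneg_left ht1 (abs_nonneg k)]

/-- A continuous real function taking a negative and a positive value has a zero. -/
lemma stmt18_ex_zero (f : ℝ → ℝ) (hf : Continuous f) (s t : ℝ)
    (hs : f s < 0) (ht : 0 < f t) : ∃ u : ℝ, f u = 0 := by
  have h0 : (0:ℝ) ∈ Set.uIcc (f s) (f t) := Set.mem_uIcc.2 (Or.inl ⟨hs.le, ht.le⟩)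
  obtain ⟨u, _, hu⟩ := intermediate_value_uIcc (f := f) (a := s) (b := t) hf.continuousOn h0
  exact ⟨u, hu⟩

/-- If the quadratic form takes a positive value at a direction, the full quadratic
polynomial takes a positive value somewhere. -/
lemma stmt18_quad_pos (A B C D E K u1 u2 : ℝ)
    (h : 0 < A*u1^2 + B*(u1*u2) + C*u2^2) :
    ∃ p1 p2 : ℝ, 0 < A*p1^2 + B*(p1*p2) + C*p2^2 + D*p1 + E*p2 + K := by
  obtain ⟨t, ht⟩ := stmt18_ex_pos (A*u1^2 + B*(u1*u2) + C*u2^2) (D*u1 + E*u2) K h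
  refine ⟨t*u1, t*u2, ?_⟩
  have hr : A*(t*u1)^2 + B*((t*u1)*(t*u2)) + C*(t*u2)^2 + D*(t*u1) + E*(t*u2) + K
      = (A*u1^2 + B*(u1*u2) + C*u2^2)*t^2 + (D*u1 + E*u2)*t + K := by ring
  linarith [hr.ge, hr.le]

/-- If the quadratic form takes values of both signs, then the full quadratic
polynomial has a zero. -/
lemma stmt18_key2 (A B C D E K u1 u2 v1 v2 : ℝ)
    (hu : 0 < A*u1^2 + B*(u1*u2) + C*u2^2)
    (hv : A*v1^2 + B*(v1*v2) + C*v2^2 < 0)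
    (hP : ∀ x y : ℝ, A*x^2 + B*(x*y) + C*y^2 + D*x + E*y + K ≠ 0) : False := by
  obtain ⟨p1, p2, hp⟩ := stmt18_quad_pos A B C D E K u1 u2 hu
  obtain ⟨q1, q2, hq'⟩ := stmt18_quad_pos (-A) (-B) (-C) (-D) (-E) (-K) v1 v2 (by nlinarith)
  have hq : A*q1^2 + B*(q1*q2) + C*q2^2 + D*q1 + E*q2 + K < 0 := by nlinarith
  have hcont : Continuous (fun s : ℝ =>
      A*((1-s)*q1 + s*p1)^2 + B*(((1-s)*q1 + s*p1)*((1-s)*q2 + s*p2))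
        + C*((1-s)*q2 + s*p2)^2 + D*((1-s)*q1 + s*p1) + E*((1-s)*q2 + s*p2) + K) := by
    continuity
  obtain ⟨w, hw⟩ := stmt18_ex_zero _ hcont 0 1 (by norm_num; nlinarith) (by norm_num; nlinarith)
  exact hP ((1-w)*q1 + w*p1) ((1-w)*q2 + w*p2) hw

/-- A quadratic polynomial whose quadratic form has positive discriminant has a zero. -/
lemma stmt18_key (A B C D E K : ℝ) (hdisc : 0 < B^2 - 4*A*C)
    (hP : ∀ x y : ℝ, A*x^2 + B*(x*y) + C*y^2 + D*x + E*y + K ≠ 0) : False := by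
  rcases lt_trichotomy A 0 with hA | hA | hA
  · -- A < 0 : Q(1,0) = A < 0, Q(-B, 2A) = -A*(B^2-4AC) > 0
    refine stmt18_key2 A B C D E K (-B) (2*A) 1 0 ?_ ?_ hP
    · nlinarith
    · nlinarith
  · rcases lt_trichotomy C 0 with hC | hC | hC
    · refine stmt18_key2 A B C D E K (2*C) (-B) 0 1 ?_ ?_ hP
      · nlinarith
      · nlinarith
    · -- A = 0, C = 0, B ≠ 0
      rcases lt_trichotomy B 0 with hB | hB | hB
      · refine stmt18_key2 A B C D E K 1 (-1) 1 1 ?_ ?_ hP <;> nlinarith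
      · nlinarith
      · refine stmt18_key2 A B C D E K 1 1 1 (-1) ?_ ?_ hP <;> nlinarith
    · refine stmt18_key2 A B C D E K 0 1 (2*C) (-B) ?_ ?_ hP
      · nlinarith
      · nlinarith
  · refine stmt18_key2 A B C D E K 1 0 (-B) (2*A) ?_ ?_ hP
    · nlinarith
    · nlinarith

/-- if a quadratic map of the plane has nowhere-vanishing Jacobian
determinant (empty critical set), then the Jacobian determinant is a nonzero
constant. -/
theorem stmt18 (a0 a1 a2 a3 a4 a5 b0 b1 b2 b3 b4 b5 : ℝ)
    (hdet : ∀ x y : ℝ,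
      (2*a0*x + a1*y + a3) * (b1*x + 2*b2*y + b4)
        - (a1*x + 2*a2*y + a4) * (2*b0*x + b1*y + b3) ≠ 0) :
    ∃ c : ℝ, c ≠ 0 ∧ ∀ x y : ℝ,
      (2*a0*x + a1*y + a3) * (b1*x + 2*b2*y + b4)
        - (a1*x + 2*a2*y + a4) * (2*b0*x + b1*y + b3) = c := by
  have hK : a3*b4 - a4*b3 ≠ 0 := by
    intro h
    exact hdet 0 0 (by linear_combination h)
  -- Step 1: the quadratic part of the first component is degenerate
  have e1 : a1^2 = 4*a0*a2 := by
    by_contra hne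
    have hd : 4*a0*a2 - a1^2 ≠ 0 := sub_ne_zero.mpr (Ne.symm hne)
    set x := (a1*a4 - 2*a2*a3)/(4*a0*a2 - a1^2) with hx
    set y := (a1*a3 - 2*a0*a4)/(4*a0*a2 - a1^2) with hy
    have h1 : 2*a0*x + a1*y + a3 = 0 := by
      rw [hx, hy, mul_div_assoc', mul_div_assoc', ← add_div, div_add' _ _ _ hd, div_eq_iff hd]; ring
    have h3 : a1*x + 2*a2*y + a4 = 0 := by
      rw [hx, hy, mul_div_assoc', mul_div_assoc', ← add_div, div_add' _ _ _ hd, div_eq_iff hd]; ring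
    exact hdet x y (by linear_combination (b1*x + 2*b2*y + b4) * h1
      - (2*b0*x + b1*y + b3) * h3)
  -- Step 2: the quadratic part of the second component is degenerate
  have e2 : b1^2 = 4*b0*b2 := by
    by_contra hne
    have hd : b1^2 - 4*b0*b2 ≠ 0 := sub_ne_zero.mpr hne
    set x := (2*b2*b3 - b1*b4)/(b1^2 - 4*b0*b2) with hx
    set y := (2*b0*b4 - b1*b3)/(b1^2 - 4*b0*b2) with hy
    have h2 : b1*x + 2*b2*y + b4 = 0 := by
      rw [hx, hy, mul_div_assoc', mul_div_assoc', ← add_div, div_add' _ _ _ hd, div_eq_iff hd]; ring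
    have h4 : 2*b0*x + b1*y + b3 = 0 := by
      rw [hx, hy, mul_div_assoc', mul_div_assoc', ← add_div, div_add' _ _ _ hd, div_eq_iff hd]; ring
    exact hdet x y (by linear_combination (2*a0*x + a1*y + a3) * h2
      - (a1*x + 2*a2*y + a4) * h4)
  -- Step 3: the mixed degeneracy quantity vanishes
  have hzero : 2*a0*b2 + 2*a2*b0 - a1*b1 = 0 := by
    by_contra hh
    have hsq : 0 < (2*a0*b2 + 2*a2*b0 - a1*b1)^2 :=
      lt_of_le_of_ne (sq_nonneg _) (Ne.symm (pow_ne_zero 2 hh))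
    have hid : (4*(a0*b2 - a2*b0))^2 - 4*(2*(a0*b1 - a1*b0))*(2*(a1*b2 - a2*b1))
        = 4*(2*a0*b2 + 2*a2*b0 - a1*b1)^2 := by
      linear_combination (-4*(b1^2 - 4*b0*b2))*e1
    refine stmt18_key (2*(a0*b1 - a1*b0)) (4*(a0*b2 - a2*b0)) (2*(a1*b2 - a2*b1))
      (2*a0*b4 + a3*b1 - a1*b3 - 2*a4*b0) (a1*b4 + 2*a3*b2 - 2*a2*b3 - a4*b1)
      (a3*b4 - a4*b3) (by linarith) ?_
    intro x y hxy
    exact hdet x y (by linear_combination hxy)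
  -- Step 4: all quadratic coefficients of the Jacobian determinant vanish
  have hA : a0*b1 - a1*b0 = 0 := by
    have h2 : (a0*b1 - a1*b0)^2 = 0 := by
      linear_combination b0^2*e1 + a0^2*e2 + (2*a0*b0)*hzero
    exact pow_eq_zero_iff two_ne_zero |>.mp h2
  have hC : a1*b2 - a2*b1 = 0 := by
    have h2 : (a1*b2 - a2*b1)^2 = 0 := by
      linear_combination b2^2*e1 + a2^2*e2 + (2*a2*b2)*hzero
    exact pow_eq_zero_iff two_ne_zero |>.mp h2
  have hB : a0*b2 - a2*b0 = 0 := by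
    have h2 : (a0*b2 - a2*b0)^2 = 0 := by
      linear_combination (a1*b2 - a2*b1)*hA
        + ((2*a0*b2 + 2*a2*b0 - a1*b1)/4)*hzero + (-(b1^2 - 4*b0*b2)/4)*e1
    exact pow_eq_zero_iff two_ne_zero |>.mp h2
  -- Step 5: the linear coefficients vanish too
  have hD : 2*a0*b4 + a3*b1 - a1*b3 - 2*a4*b0 = 0 := by
    by_contra hDne
    set x := -(a3*b4 - a4*b3)/(2*a0*b4 + a3*b1 - a1*b3 - 2*a4*b0) with hxd
    have hx : (2*a0*b4 + a3*b1 - a1*b3 - 2*a4*b0)*x + (a3*b4 - a4*b3) = 0 := by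
      rw [hxd]; field_simp; ring
    exact hdet x 0 (by linear_combination (2*x^2)*hA + hx)
  have hE : a1*b4 + 2*a3*b2 - 2*a2*b3 - a4*b1 = 0 := by
    by_contra hEne
    set y := -(a3*b4 - a4*b3)/(a1*b4 + 2*a3*b2 - 2*a2*b3 - a4*b1) with hyd
    have hy : (a1*b4 + 2*a3*b2 - 2*a2*b3 - a4*b1)*y + (a3*b4 - a4*b3) = 0 := by
      rw [hyd]; field_simp; ring
    exact hdet 0 y (by linear_combination (2*y^2)*hC + hy)
  refine ⟨a3*b4 - a4*b3, hK, fun x y => ?_⟩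
  linear_combination (2*x^2)*hA + (4*(x*y))*hB + (2*y^2)*hC + x*hD + y*hE
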